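/- Applicative similarity for extended combinatory logic (xCL) is sound for the contextual preorder: for all terms p,q ∈ Λ, if p ≲app q then p ≲ctx q. -/

import Mathlib

namespace XCL

/-- Terms of extended combinatory logic (xCL). -/
inductive Tm : Type
  | S : Tm
  | K : Tm
  | I : Tm
  | S1 (t : Tm) : Tm
  | K1 (t : Tm) : Tm
  | S2 (t s : Tm) : Tm
  | app (t s : Tm) : Tm

/-- Labeled transitions `p —t→ p'` (`LStep p t p'`). -/
inductive LStep : Tm → Tm → Tm → Prop
  | S (t : Tm) : LStep .S t (.S1 t)
  | S1 (p t : Tm) : LStep (.S1 p) t (.S2 p t)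
  | S2 (p q t : Tm) : LStep (.S2 p q) t (.app (.app p t) (.app q t))
  | K (t : Tm) : LStep .K t (.K1 t)
  | K1 (p t : Tm) : LStep (.K1 p) t p
  | I (t : Tm) : LStep .I t t

/-- Unlabeled transitions `p → p'`. -/
inductive Step : Tm → Tm → Prop
  | appL {p p' : Tm} (q : Tm) : Step p p' → Step (.app p q) (.app p' q)
  | beta {p q p' : Tm} : LStep p q p' → Step (.app p q) p'

/-- `p ⇒ p'`: reflexive-transitive closure of `→`. -/
def Steps : Tm → Tm → Prop := Relation.ReflTransGen Step

/-- `p ⇒^t p'`: weak labeled transition. -/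
def WLStep (p t p' : Tm) : Prop := ∃ p'', Steps p p'' ∧ LStep p'' t p'

/-- `p` terminates: it admits no unlabeled transition. -/
def Terminates (p : Tm) : Prop := ∀ p', ¬ Step p p'

/-- `p ⇓ p'`. -/
def BigStep (p p' : Tm) : Prop := Steps p p' ∧ Terminates p'

/-- `p⇓`: `p` eventually terminates. -/
def Conv (p : Tm) : Prop := ∃ p', BigStep p p'

/-- Applicative simulations. -/
def IsAppSim (R : Tm → Tm → Prop) : Prop :=
  ∀ p q, R p q →
    (∀ p', Step p p' → ∃ q', Steps q q' ∧ R p' q') ∧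
    (∀ t p', LStep p t p' → ∃ q', WLStep q t q' ∧ R p' q')

/-- Applicative similarity `≲app`: the union of all applicative simulations. -/
def AppSim (p q : Tm) : Prop := ∃ R, IsAppSim R ∧ R p q

/-- One-hole contexts `C[·]`. -/
inductive Ctx : Type
  | hole : Ctx
  | S1 (c : Ctx) : Ctx
  | K1 (c : Ctx) : Ctx
  | S2L (c : Ctx) (s : Tm) : Ctx
  | S2R (t : Tm) (c : Ctx) : Ctx
  | appL (c : Ctx) (s : Tm) : Ctx
  | appR (t : Tm) (c : Ctx) : Ctx

/-- `C[p]`: plugging a term into the hole of a context. -/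
def plug : Ctx → Tm → Tm
  | .hole, p => p
  | .S1 c, p => .S1 (plug c p)
  | .K1 c, p => .K1 (plug c p)
  | .S2L c s, p => .S2 (plug c p) s
  | .S2R t c, p => .S2 t (plug c p)
  | .appL c s, p => .app (plug c p) s
  | .appR t c, p => .app t (plug c p)

/-- The contextual preorder `≲ctx`. -/
def CtxLe (p q : Tm) : Prop := ∀ C : Ctx, Conv (plug C p) → Conv (plug C q)

/-- Congruences: relations compatible with all xCL operators. -/
def IsCong (R : Tm → Tm → Prop) : Prop :=
  R .S .S ∧ R .K .K ∧ R .I .I ∧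
  (∀ p q, R p q → R (.S1 p) (.S1 q)) ∧
  (∀ p q, R p q → R (.K1 p) (.K1 q)) ∧
  (∀ p q p' q', R p q → R p' q' → R (.S2 p p') (.S2 q q')) ∧
  (∀ p q p' q', R p q → R p' q' → R (.app p p') (.app q q'))

/-- Adequacy for termination. -/
def Adequate (R : Tm → Tm → Prop) : Prop := ∀ p q, R p q → Conv p → Conv q

/-- The step-indexed approximations `Lⁿ`. -/
def LrelN : ℕ → Tm → Tm → Prop
  | 0, _, _ => True
  | n+1, p, q => LrelN n p q ∧
      (∀ p', Step p p' → ∃ q', Steps q q' ∧ LrelN n p' q') ∧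
      (Terminates p → ∃ qb, BigStep q qb ∧
        ∀ d e p' q', LrelN n d e → LStep p d p' → LStep qb e q' → LrelN n p' q')

/-- The step-indexed logical relation `L = ⋂ₙ Lⁿ`. -/
def LRel (p q : Tm) : Prop := ∀ n, LrelN n p q

end XCL


namespace XCL

/-! ### Basic facts about steps -/

lemma lstep_value {p t p' : Tm} (h : LStep p t p') : Terminates p := by
  intro r hr; cases h <;> cases hr

lemma lstep_det {p t a b : Tm} (h1 : LStep p t a) (h2 : LStep p t b) : a = b := by
  cases h1 <;> cases h2 <;> rfl

lemma step_det {p a b : Tm} (h1 : Step p a) (h2 : Step p b) : a = b := by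
  induction h1 generalizing b with
  | appL q h ih =>
    cases h2 with
    | appL _ h' => rw [ih h']
    | beta hl => exact absurd h (lstep_value hl _)
  | beta hl =>
    cases h2 with
    | appL _ h' => exact absurd h' (lstep_value hl _)
    | beta hl' => exact lstep_det hl hl'

lemma ex_step_app (p : Tm) : ∀ q, ∃ r, Step (.app p q) r := by
  induction p with
  | S => exact fun q => ⟨_, .beta (.S q)⟩
  | K => exact fun q => ⟨_, .beta (.K q)⟩
  | I => exact fun q => ⟨_, .beta (.I q)⟩
  | S1 t => exact fun q => ⟨_, .beta (.S1 t q)⟩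
  | K1 t => exact fun q => ⟨_, .beta (.K1 t q)⟩
  | S2 t s => exact fun q => ⟨_, .beta (.S2 t s q)⟩
  | app a b iha ihb =>
    intro q
    obtain ⟨r, hr⟩ := iha b
    exact ⟨_, .appL q hr⟩

lemma terminates_lstep {p : Tm} (h : Terminates p) (t : Tm) : ∃ p', LStep p t p' := by
  cases p with
  | app a b =>
    obtain ⟨r, hr⟩ := ex_step_app a b
    exact absurd hr (h r)
  | S => exact ⟨_, .S t⟩
  | K => exact ⟨_, .K t⟩
  | I => exact ⟨_, .I t⟩
  | S1 s => exact ⟨_, .S1 s t⟩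
  | K1 s => exact ⟨_, .K1 s t⟩
  | S2 s u => exact ⟨_, .S2 s u t⟩

lemma steps_appL {p p' q : Tm} (h : Steps p p') : Steps (.app p q) (.app p' q) :=
  Relation.ReflTransGen.lift (fun x => Tm.app x q) (fun _ _ h => Step.appL q h) _ _ h

lemma steps_from_terminal {p b : Tm} (hp : Terminates p) (h : Steps p b) : b = p := by
  rcases h.cases_head with rfl | ⟨c, hc, _⟩
  · rfl
  · exact absurd hc (hp c)

lemma steps_unique {p a : Tm} (h1 : Steps p a) (ha : Terminates a) :
    ∀ b, Steps p b → Steps b a := by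
  induction h1 using Relation.ReflTransGen.head_induction_on with
  | refl =>
    intro b hb
    rw [steps_from_terminal ha hb]
    exact .refl
  | head hstep htail ih =>
    intro b hb
    rcases hb.cases_head with rfl | ⟨c, hc, hcb⟩
    · exact Relation.ReflTransGen.head hstep htail
    · rw [step_det hc hstep] at hcb
      exact ih b hcb

/-! ### AppSim is a simulation -/

lemma appsim_isSim : IsAppSim AppSim := by
  rintro p q ⟨R, hR, hpq⟩
  obtain ⟨h1, h2⟩ := hR p q hpq
  exact ⟨fun p' hs => let ⟨q', a, b⟩ := h1 p' hs; ⟨q', a, R, hR, b⟩,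
         fun t p' hl => let ⟨q', a, b⟩ := h2 t p' hl; ⟨q', a, R, hR, b⟩⟩

lemma appsim_steps {p p' : Tm} (hs : Steps p p') :
    ∀ q, AppSim p q → ∃ q', Steps q q' ∧ AppSim p' q' := by
  induction hs using Relation.ReflTransGen.head_induction_on with
  | refl => exact fun q h => ⟨q, .refl, h⟩
  | head hstep _ ih =>
    intro q h
    obtain ⟨q₁, hq1, h1⟩ := (appsim_isSim _ _ h).1 _ hstep
    obtain ⟨q', hq', h'⟩ := ih q₁ h1
    exact ⟨q', hq1.trans hq', h'⟩

/-! ### Compatibility of the logical relation -/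

lemma lrel_app : ∀ n {p q d e : Tm}, LrelN n p q → LrelN n d e →
    LrelN n (.app p d) (.app q e) := by
  intro n
  induction n with
  | zero => intro _ _ _ _ _ _; trivial
  | succ n ih =>
    intro p q d e hpq hde
    refine ⟨ih hpq.1 hde.1, ?_, ?_⟩
    · intro r hr
      cases hr with
      | appL _ hstep =>
        obtain ⟨q', hq, h'⟩ := hpq.2.1 _ hstep
        exact ⟨.app q' e, steps_appL hq, ih h' hde.1⟩
      | beta hl =>
        obtain ⟨qb, hqb, T⟩ := hpq.2.2 (lstep_value hl)
        obtain ⟨q', hq'⟩ := terminates_lstep hqb.2 e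
        refine ⟨q', ?_, T _ _ _ _ hde.1 hl hq'⟩
        exact (steps_appL hqb.1).trans (Relation.ReflTransGen.single (.beta hq'))
    · intro habs
      obtain ⟨r, hr⟩ := ex_step_app p d
      exact absurd hr (habs r)

lemma lrel_S2 : ∀ n {p q d e : Tm}, LrelN n p q → LrelN n d e →
    LrelN n (.S2 p d) (.S2 q e) := by
  intro n
  induction n with
  | zero => intro _ _ _ _ _ _; trivial
  | succ n ih =>
    intro p q d e hpq hde
    refine ⟨ih hpq.1 hde.1, ?_, fun _ => ?_⟩
    · intro r hr; cases hr
    refine ⟨.S2 q e, ⟨.refl, fun _ h => by cases h⟩, ?_⟩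
    intro a b p' q' hab h1 h2
    cases h1; cases h2
    exact lrel_app n (lrel_app n hpq.1 hab) (lrel_app n hde.1 hab)

lemma lrel_S1 : ∀ n {p q : Tm}, LrelN n p q → LrelN n (.S1 p) (.S1 q) := by
  intro n
  induction n with
  | zero => intro _ _ _; trivial
  | succ n ih =>
    intro p q hpq
    refine ⟨ih hpq.1, ?_, fun _ => ?_⟩
    · intro r hr; cases hr
    refine ⟨.S1 q, ⟨.refl, fun _ h => by cases h⟩, ?_⟩
    intro a b p' q' hab h1 h2
    cases h1; cases h2
    exact lrel_S2 n hpq.1 hab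

lemma lrel_K1 : ∀ n {p q : Tm}, LrelN n p q → LrelN n (.K1 p) (.K1 q) := by
  intro n
  induction n with
  | zero => intro _ _ _; trivial
  | succ n ih =>
    intro p q hpq
    refine ⟨ih hpq.1, ?_, fun _ => ?_⟩
    · intro r hr; cases hr
    refine ⟨.K1 q, ⟨.refl, fun _ h => by cases h⟩, ?_⟩
    intro a b p' q' hab h1 h2
    cases h1; cases h2
    exact hpq.1

lemma lrel_S : ∀ n, LrelN n Tm.S Tm.S := by
  intro n
  induction n with
  | zero => trivial
  | succ n ih =>
    refine ⟨ih, ?_, fun _ => ?_⟩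
    · intro r hr; cases hr
    refine ⟨.S, ⟨.refl, fun _ h => by cases h⟩, ?_⟩
    intro a b p' q' hab h1 h2
    cases h1; cases h2
    exact lrel_S1 n hab

lemma lrel_K : ∀ n, LrelN n Tm.K Tm.K := by
  intro n
  induction n with
  | zero => trivial
  | succ n ih =>
    refine ⟨ih, ?_, fun _ => ?_⟩
    · intro r hr; cases hr
    refine ⟨.K, ⟨.refl, fun _ h => by cases h⟩, ?_⟩
    intro a b p' q' hab h1 h2
    cases h1; cases h2
    exact lrel_K1 n hab

lemma lrel_I : ∀ n, LrelN n Tm.I Tm.I := by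
  intro n
  induction n with
  | zero => trivial
  | succ n ih =>
    refine ⟨ih, ?_, fun _ => ?_⟩
    · intro r hr; cases hr
    refine ⟨.I, ⟨.refl, fun _ h => by cases h⟩, ?_⟩
    intro a b p' q' hab h1 h2
    cases h1; cases h2
    exact hab

lemma lrel_refl (p : Tm) : ∀ n, LrelN n p p := by
  induction p with
  | S => exact lrel_S
  | K => exact lrel_K
  | I => exact lrel_I
  | S1 t ih => exact fun n => lrel_S1 n (ih n)
  | K1 t ih => exact fun n => lrel_K1 n (ih n)
  | S2 t s ih1 ih2 => exact fun n => lrel_S2 n (ih1 n) (ih2 n)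
  | app t s ih1 ih2 => exact fun n => lrel_app n (ih1 n) (ih2 n)

lemma lrel_plug {p q : Tm} (h : LRel p q) : ∀ C : Ctx, LRel (plug C p) (plug C q) := by
  intro C
  induction C with
  | hole => exact h
  | S1 c ih => exact fun n => lrel_S1 n (ih n)
  | K1 c ih => exact fun n => lrel_K1 n (ih n)
  | S2L c s ih => exact fun n => lrel_S2 n (ih n) (lrel_refl s n)
  | S2R t c ih => exact fun n => lrel_S2 n (lrel_refl t n) (ih n)
  | appL c s ih => exact fun n => lrel_app n (ih n) (lrel_refl s n)
  | appR t c ih => exact fun n => lrel_app n (lrel_refl t n) (ih n)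

/-! ### AppSim composed with the logical relation -/

lemma lrel_appsim : ∀ n {p q r : Tm}, LrelN n p q → AppSim q r → LrelN n p r := by
  intro n
  induction n with
  | zero => intro _ _ _ _ _; trivial
  | succ n ih =>
    intro p q r hpq hqr
    refine ⟨ih hpq.1 hqr, ?_, ?_⟩
    · intro p' hs
      obtain ⟨q', hq, hl⟩ := hpq.2.1 p' hs
      obtain ⟨r', hr, hqr'⟩ := appsim_steps hq r hqr
      exact ⟨r', hr, ih hl hqr'⟩
    · intro hp
      obtain ⟨qb, ⟨hqsteps, hqbterm⟩, T⟩ := hpq.2.2 hp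
      obtain ⟨r₀, hr0, hsim0⟩ := appsim_steps hqsteps r hqr
      obtain ⟨x, hx⟩ := terminates_lstep hqbterm .I
      obtain ⟨r', ⟨r₁, hr01, hr1l⟩, _⟩ := (appsim_isSim qb r₀ hsim0).2 .I x hx
      have hr1term := lstep_value hr1l
      refine ⟨r₁, ⟨hr0.trans hr01, hr1term⟩, ?_⟩
      intro d e p' q'' hde hpd hr1e
      obtain ⟨qm, hqm⟩ := terminates_lstep hqbterm e
      have hLp'qm := T d e p' qm hde hpd hqm
      obtain ⟨rr, ⟨r₂, hr02, hr2l⟩, hsimm⟩ := (appsim_isSim qb r₀ hsim0).2 e qm hqm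
      have heq : r₁ = r₂ :=
        steps_from_terminal (lstep_value hr2l) (steps_unique hr01 hr1term r₂ hr02)
      subst heq
      rw [lstep_det hr1e hr2l]
      exact ih hLp'qm hsimm

lemma appsim_lrel {p q : Tm} (h : AppSim p q) : LRel p q :=
  fun n => lrel_appsim n (lrel_refl p n) h

/-! ### Adequacy -/

inductive StepsN : ℕ → Tm → Tm → Prop
  | refl (p) : StepsN 0 p p
  | head {p p' q : Tm} {n : ℕ} : Step p p' → StepsN n p' q → StepsN (n + 1) p q

lemma steps_to_stepsN {p q : Tm} (h : Steps p q) : ∃ n, StepsN n p q := by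
  induction h using Relation.ReflTransGen.head_induction_on with
  | refl => exact ⟨0, .refl q⟩
  | head hstep _ ih =>
    obtain ⟨n, hn⟩ := ih
    exact ⟨n + 1, .head hstep hn⟩

lemma adequacy_aux : ∀ n {p pv q : Tm}, StepsN n p pv → Terminates pv →
    LrelN (n + 1) p q → Conv q := by
  intro n
  induction n with
  | zero =>
    intro p pv q hsn hterm hl
    cases hsn
    obtain ⟨qb, hqb, _⟩ := hl.2.2 hterm
    exact ⟨qb, hqb⟩
  | succ n ih =>
    intro p pv q hsn hterm hl
    cases hsn with
    | head hstep htail =>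
      obtain ⟨q', hq, hl'⟩ := hl.2.1 _ hstep
      obtain ⟨qb, hqb1, hqb2⟩ := ih htail hterm hl'
      exact ⟨qb, hq.trans hqb1, hqb2⟩

lemma lrel_adequate {p q : Tm} (h : LRel p q) : Conv p → Conv q := by
  rintro ⟨pv, hsteps, hterm⟩
  obtain ⟨n, hn⟩ := steps_to_stepsN hsteps
  exact adequacy_aux n hn hterm (h (n + 1))

end XCL

open XCL in
/-- Applicative similarity for xCL is sound for the contextual preorder. -/
theorem appSim_sound : ∀ p q : Tm, AppSim p q → CtxLe p q := by
  intro p q h C hconv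
  exact lrel_adequate (lrel_plug (appsim_lrel h) C) hconv
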